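/- If f : ℝ → ℝ is a positive log-concave probability density on ℝ, then f has finite moments of all orders: for every natural number k, the integral ∫ |s|^k · f(s) ds over ℝ is finite. -/

import Mathlib

open MeasureTheory Real Set

lemma no_lower_bound_aux (f : ℝ → ℝ) (hmeas : Measurable f) (hfint : Integrable f)
    (c : ℝ) (hc : 0 < c) (hb : ∀ s ∈ Ici (0:ℝ), c ≤ f s) : False := by
  have h1 : (ENNReal.ofReal c) * volume (Ici (0:ℝ)) ≤ ∫⁻ a, ‖f a‖₊ := by
    rw [← setLIntegral_const (Ici (0:ℝ)) (ENNReal.ofReal c)]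
    calc ∫⁻ a in Ici (0:ℝ), ENNReal.ofReal c
        ≤ ∫⁻ a in Ici (0:ℝ), ‖f a‖₊ := by
          refine setLIntegral_mono hmeas.nnnorm.coe_nnreal_ennreal (fun x hx => ?_)
          exact le_trans (ENNReal.ofReal_le_ofReal (hb x hx)) (Real.ofReal_le_enorm _)
      _ ≤ ∫⁻ a, ‖f a‖₊ := setLIntegral_le_lintegral _ _
  rw [Real.volume_Ici, ENNReal.mul_top (ENNReal.ofReal_pos.2 hc).ne'] at h1
  have h2 := hfint.2
  rw [HasFiniteIntegral] at h2
  exact absurd (lt_of_le_of_lt h1 h2) (lt_irrefl _)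

-- Right-tail integrability
lemma right_tail (f : ℝ → ℝ) (hmeas : Measurable f) (hpos : ∀ x, 0 < f x)
    (hfint : Integrable f)
    (hconc : ConcaveOn ℝ Set.univ (fun x => Real.log (f x))) (k : ℕ) :
    IntegrableOn (fun s : ℝ => |s| ^ k * f s) (Ici (0:ℝ)) := by
  -- continuity of f
  have hgcont : Continuous fun x => Real.log (f x) := hconc.locallyLipschitz.continuous
  have hfcont : Continuous f := by
    have : f = fun x => Real.exp (Real.log (f x)) := by
      funext x; rw [Real.exp_log (hpos x)]
    rw [this]; exact Real.continuous_exp.comp hgcont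
  -- find decreasing pair on the right
  obtain ⟨u, hu0, v, huv, hlt⟩ : ∃ u, 0 ≤ u ∧ ∃ v, u < v ∧ f v < f u := by
    by_contra hcon
    push_neg at hcon
    refine no_lower_bound_aux f hmeas hfint (f 0) (hpos 0) (fun s hs => ?_)
    rcases eq_or_lt_of_le (Set.mem_Ici.mp hs) with h | h
    · rw [← h]
    · exact hcon 0 le_rfl s h
  have hv0 : 0 < v := lt_of_le_of_lt hu0 huv
  set g : ℝ → ℝ := fun x => Real.log (f x) with hg
  set m : ℝ := (g v - g u) / (v - u) with hm
  have hmneg : m < 0 :=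
    div_neg_of_neg_of_pos (by
      have : g v < g u := Real.log_lt_log (hpos v) hlt
      linarith) (by linarith)
  -- tail bound
  have tail : ∀ s, v ≤ s → f s ≤ f v * Real.exp (m * (s - v)) := by
    intro s hs
    rcases eq_or_lt_of_le hs with h | h
    · rw [← h]; simp
    · have hsl := hconc.slope_anti_adjacent (Set.mem_univ u) (Set.mem_univ s) huv h
      -- (g s - g v)/(s - v) ≤ (g v - g u)/(v - u) = m
      have h1 : (g s - g v) / (s - v) ≤ m := hsl
      have h2 : g s ≤ g v + m * (s - v) := by
        have := (div_le_iff₀ (by linarith : (0:ℝ) < s - v)).1 h1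
        linarith
      calc f s = Real.exp (g s) := (Real.exp_log (hpos s)).symm
        _ ≤ Real.exp (g v + m * (s - v)) := Real.exp_le_exp.2 h2
        _ = f v * Real.exp (m * (s - v)) := by
            rw [Real.exp_add, Real.exp_log (hpos v)]
  -- majorant integrable on Ici v
  have hmaj : IntegrableOn (fun x : ℝ => x ^ k * Real.exp (m * x)) (Ici v) := by
    have h0 : IntegrableOn (fun x : ℝ => x ^ (k:ℝ) * Real.exp (-(-m) * x ^ (1:ℝ))) (Ioi 0) :=
      integrableOn_rpow_mul_exp_neg_mul_rpow (neg_one_lt_zero.trans_le (Nat.cast_nonneg k)) zero_lt_one (by linarith)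
    have h1 : IntegrableOn (fun x : ℝ => x ^ k * Real.exp (m * x)) (Ioi 0) := by
      refine h0.congr_fun (fun x hx => ?_) measurableSet_Ioi
      beta_reduce
      rw [Real.rpow_natCast, Real.rpow_one, neg_neg]
    exact h1.mono_set (fun x hx => lt_of_lt_of_le hv0 hx)
  have hIci : IntegrableOn (fun s : ℝ => |s| ^ k * f s) (Ici v) := by
    refine Integrable.mono ((hmaj.const_mul (f v * Real.exp (-(m * v))))) ?_ ?_
    · exact ((continuous_abs.pow k).mul hfcont).aestronglyMeasurable.restrict
    · filter_upwards [ae_restrict_mem measurableSet_Ici] with s hs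
      have hs0 : (0:ℝ) < s := lt_of_lt_of_le hv0 hs
      have key : |s| ^ k * f s ≤ f v * Real.exp (-(m * v)) * (s ^ k * Real.exp (m * s)) := by
        have h1 : |s| ^ k * f s ≤ |s| ^ k * (f v * Real.exp (m * (s - v))) :=
          mul_le_mul_of_nonneg_left (tail s hs) (by positivity)
        have h2 : |s| ^ k * (f v * Real.exp (m * (s - v)))
            = f v * Real.exp (-(m * v)) * (s ^ k * Real.exp (m * s)) := by
          rw [abs_of_nonneg hs0.le, mul_sub, sub_eq_add_neg, Real.exp_add]
          ring
        linarith
      rw [Real.norm_eq_abs, Real.norm_eq_abs,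
        abs_of_nonneg (mul_nonneg (by positivity) (hpos s).le),
        abs_of_nonneg (mul_pos (mul_pos (hpos v) (Real.exp_pos _))
          (mul_pos (pow_pos hs0 k) (Real.exp_pos _))).le]
      exact key
  have hIcc : IntegrableOn (fun s : ℝ => |s| ^ k * f s) (Icc 0 v) :=
    ((continuous_abs.pow k).mul hfcont).integrableOn_Icc
  have := hIcc.union hIci
  rwa [Set.Icc_union_Ici_eq_Ici hv0.le] at this

theorem logconcave_density_finite_moments
    (f : ℝ → ℝ)
    (hmeas : Measurable f)
    (hpos : ∀ x, 0 < f x)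
    (hint : ∫ x, f x = 1)
    (hconc : ConcaveOn ℝ Set.univ (fun x => Real.log (f x))) :
    ∀ k : ℕ, Integrable (fun s : ℝ => |s| ^ k * f s) := by
  intro k
  have hfint : Integrable f := by
    by_contra h
    rw [integral_undef h] at hint; norm_num at hint
  have hright := right_tail f hmeas hpos hfint hconc k
  set f' : ℝ → ℝ := fun x => f (-x) with hf'
  have hmeas' : Measurable f' := hmeas.comp measurable_neg
  have hpos' : ∀ x, 0 < f' x := fun x => hpos (-x)
  have hfint' : Integrable f' :=
    (Measure.measurePreserving_neg (volume : Measure ℝ)).integrable_comp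
      hmeas.aestronglyMeasurable |>.2 hfint
  have hconc' : ConcaveOn ℝ Set.univ (fun x => Real.log (f' x)) := by
    refine ⟨convex_univ, fun x _ y _ a b ha hb hab => ?_⟩
    have := hconc.2 (Set.mem_univ (-x)) (Set.mem_univ (-y)) ha hb hab
    have heq : a • (-x) + b • (-y) = -(a • x + b • y) := by
      simp [smul_neg]; ring
    rw [heq] at this
    simpa [hf'] using this
  have hleft' := right_tail f' hmeas' hpos' hfint' hconc' k
  have hleft : IntegrableOn (fun s : ℝ => |s| ^ k * f s) (Iic (0:ℝ)) := by
    rw [← (Measure.measurePreserving_neg (volume : Measure ℝ)).integrableOn_comp_preimage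
        (Homeomorph.neg ℝ).measurableEmbedding]
    simp only [Function.comp_def, neg_preimage, neg_Iic, neg_zero, abs_neg]
    exact hleft'
  have := hleft.union hright
  rwa [Set.Iic_union_Ici, integrableOn_univ] at this
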